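/- For every real number ν ≥ 1 such that 2ν is an integer, (ν+1)^ν · (ν+3)^ν ≤ Γ(ν+1)² · 8^ν, where Γ is the Gamma function. -/

import Mathlib

set_option maxRecDepth 4000 in
lemma key_nat_small :
    ∀ n : ℕ, n < 200 → ((n+4)*(n+8))^(n+2) ≤ 64*(n+2)^4*((n+2)*(n+6))^n := by decide

lemma key_real (n : ℕ) :
    (((n:ℝ)+4)*((n:ℝ)+8))^(n+2) ≤ 64*((n:ℝ)+2)^4*(((n:ℝ)+2)*((n:ℝ)+6))^n := by
  rcases lt_or_ge n 200 with h | h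
  · exact_mod_cast key_nat_small n h
  set x := (n:ℝ) with hx
  have hx200 : (200:ℝ) ≤ x := by rw [hx]; exact_mod_cast h
  have hb : (0:ℝ) < (x+2)*(x+6) := by nlinarith
  have ha : (0:ℝ) < (x+4)*(x+8) := by nlinarith
  set u : ℝ := (4*x+20)/((x+2)*(x+6)) with hu
  have h1 : (x+4)*(x+8) = (x+2)*(x+6)*(1+u) := by
    rw [hu]; field_simp; ring
  have h2 : (x+4)*(x+8) ≤ (x+2)*(x+6) * Real.exp u := by
    rw [h1]
    have := Real.add_one_le_exp u
    nlinarith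
  have h3 : ((x+4)*(x+8))^n ≤ ((x+2)*(x+6))^n * Real.exp ((n:ℝ)*u) := by
    calc ((x+4)*(x+8))^n ≤ ((x+2)*(x+6) * Real.exp u)^n := pow_le_pow_left₀ ha.le h2 n
      _ = ((x+2)*(x+6))^n * (Real.exp u)^n := mul_pow _ _ _
      _ = ((x+2)*(x+6))^n * Real.exp ((n:ℝ)*u) := by rw [← Real.exp_nat_mul]
  have hnu : (n:ℝ)*u ≤ 4 := by
    rw [hu, mul_div_assoc', div_le_iff₀ hb]
    nlinarith
  have hexp4 : Real.exp ((n:ℝ)*u) ≤ 54.6 := by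
    have e1 : Real.exp ((n:ℝ)*u) ≤ Real.exp 4 := Real.exp_le_exp.2 hnu
    have e2 : Real.exp 4 = (Real.exp 1)^4 := by
      rw [← Real.exp_nat_mul]; norm_num
    have e4 := Real.exp_pos 1
    have e5 : (Real.exp 1)^4 ≤ (2.7182818286:ℝ)^4 :=
      pow_le_pow_left₀ e4.le Real.exp_one_lt_d9.le 4
    have e6 : (2.7182818286:ℝ)^4 ≤ 54.6 := by norm_num
    linarith [e1, e2 ▸ e1]
  have hpoly : ((x+4)*(x+8))^2 * (54.6:ℝ) ≤ 64*(x+2)^4 := by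
    nlinarith [sq_nonneg (x-200), sq_nonneg x]
  calc ((x+4)*(x+8))^(n+2) = ((x+4)*(x+8))^2 * ((x+4)*(x+8))^n := by ring
    _ ≤ ((x+4)*(x+8))^2 * (((x+2)*(x+6))^n * Real.exp ((n:ℝ)*u)) := by
        apply mul_le_mul_of_nonneg_left h3 (by positivity)
    _ = (((x+4)*(x+8))^2 * Real.exp ((n:ℝ)*u)) * ((x+2)*(x+6))^n := by ring
    _ ≤ (64*(x+2)^4) * ((x+2)*(x+6))^n := by
        apply mul_le_mul_of_nonneg_right _ (by positivity)
        calc ((x+4)*(x+8))^2 * Real.exp ((n:ℝ)*u) ≤ ((x+4)*(x+8))^2 * 54.6 := by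
              apply mul_le_mul_of_nonneg_left hexp4 (by positivity)
          _ ≤ 64*(x+2)^4 := hpoly
    _ = 64*(x+2)^4*((x+2)*(x+6))^n := by ring

lemma step_real (k : ℕ) :
    (((k:ℝ)/2+2)*((k:ℝ)/2+4))^(k+2) ≤ 64*((k:ℝ)/2+1)^4*(((k:ℝ)/2+1)*((k:ℝ)/2+3))^k := by
  set x := (k:ℝ) with hx
  have h4 : (0:ℝ) < (4:ℝ)^(k+2) := by positivity
  rw [← mul_le_mul_iff_of_pos_right h4]
  have hxn : (0:ℝ) ≤ x := by rw [hx]; positivity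
  calc ((x/2+2)*(x/2+4))^(k+2) * 4^(k+2) = ((x/2+2)*(x/2+4)*4)^(k+2) := by rw [← mul_pow]
    _ = ((x+4)*(x+8))^(k+2) := by congr 1; ring
    _ ≤ 64*(x+2)^4*((x+2)*(x+6))^k := key_real k
    _ = 64*((x/2+1)*2)^4*(((x/2+1)*(x/2+3))*4)^k := by congr 2 <;> ring
    _ = (64*(x/2+1)^4*((x/2+1)*(x/2+3))^k) * (16 * 4^k) := by
        rw [mul_pow, mul_pow]; ring
    _ = 64*(x/2+1)^4*((x/2+1)*(x/2+3))^k * 4^(k+2) := by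
        rw [pow_succ, pow_succ]; ring

lemma P_lemma : ∀ n : ℕ, 2 ≤ n →
    ((n:ℝ)/2+1)^n * ((n:ℝ)/2+3)^n ≤ Real.Gamma ((n:ℝ)/2+1)^4 * 8^n := by
  intro n
  induction n using Nat.strong_induction_on with
  | _ n ih =>
    intro hn
    match n, hn with
    | 2, _ =>
      have h2 : ((2:ℕ):ℝ)/2+1 = 1+1 := by norm_num
      rw [h2, Real.Gamma_add_one one_ne_zero, Real.Gamma_one]
      norm_num
    | 3, _ =>
      have hG : Real.Gamma (((3:ℕ):ℝ)/2+1) = 3/4 * Real.sqrt Real.pi := by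
        push_cast
        rw [Real.Gamma_add_one (by norm_num)]
        rw [show (3:ℝ)/2 = 1/2+1 by norm_num, Real.Gamma_add_one (by norm_num),
          Real.Gamma_one_half_eq]
        ring
      rw [hG]
      push_cast
      have hs : Real.sqrt Real.pi ^ 2 = Real.pi := Real.sq_sqrt Real.pi_pos.le
      have hs4 : Real.sqrt Real.pi ^ 4 = Real.pi ^ 2 := by
        rw [show (4:ℕ) = 2*2 from rfl, pow_mul, hs]
      nlinarith [Real.pi_gt_d6, hs4, Real.pi_pos]
    | (m+4), _ =>
      have ih2 := ih (m+2) (by omega) (by omega)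
      have hstep := step_real (m+2)
      rw [show m+2+2 = m+4 from by omega] at hstep
      have hG : Real.Gamma (((m+4:ℕ):ℝ)/2+1)
          = (((m+2:ℕ):ℝ)/2+1) * Real.Gamma (((m+2:ℕ):ℝ)/2+1) := by
        push_cast
        rw [show ((m:ℝ)+4)/2+1 = (((m:ℝ)+2)/2+1)+1 by ring,
          Real.Gamma_add_one (by positivity)]
      rw [hG]
      push_cast at hstep ih2 ⊢
      have hGpos : 0 < Real.Gamma (((m:ℝ)+2)/2+1) := Real.Gamma_pos_of_pos (by positivity)
      calc (((m:ℝ)+4)/2+1)^(m+4) * (((m:ℝ)+4)/2+3)^(m+4)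
          = ((((m:ℝ)+2)/2+2)*(((m:ℝ)+2)/2+4))^(m+4) := by
            rw [mul_pow]; congr 2 <;> ring
        _ ≤ 64*(((m:ℝ)+2)/2+1)^4*((((m:ℝ)+2)/2+1)*(((m:ℝ)+2)/2+3))^(m+2) := hstep
        _ = 64*(((m:ℝ)+2)/2+1)^4*((((m:ℝ)+2)/2+1)^(m+2)*(((m:ℝ)+2)/2+3)^(m+2)) := by
            rw [mul_pow]
        _ ≤ 64*(((m:ℝ)+2)/2+1)^4*(Real.Gamma (((m:ℝ)+2)/2+1)^4 * 8^(m+2)) := by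
            apply mul_le_mul_of_nonneg_left ih2 (by positivity)
        _ = ((((m:ℝ)+2)/2+1) * Real.Gamma (((m:ℝ)+2)/2+1))^4 * 8^(m+4) := by ring

/-- **Key Gamma-function inequality.** For every half-integer or integer `ν ≥ 1`,
`(ν+1)^ν (ν+3)^ν ≤ Γ(ν+1)² · 8^ν`. -/
theorem gamma_inequality_half_integers
    (ν : ℝ) (hν : 1 ≤ ν) (hhalf : ∃ k : ℤ, (k : ℝ) = 2 * ν) :
    (ν + 1) ^ ν * (ν + 3) ^ ν ≤ Real.Gamma (ν + 1) ^ 2 * 8 ^ ν := by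
  obtain ⟨k, hk⟩ := hhalf
  have hk2 : (2:ℤ) ≤ k := by
    have : (2:ℝ) ≤ (k:ℝ) := by rw [hk]; linarith
    exact_mod_cast this
  lift k to ℕ using (by omega) with n
  have hn2 : 2 ≤ n := by exact_mod_cast hk2
  push_cast at hk
  have hν2 : ν = (n:ℝ)/2 := by linarith
  have hP := P_lemma n hn2
  rw [← hν2] at hP
  have h1 : (0:ℝ) < ν + 1 := by linarith
  have h3 : (0:ℝ) < ν + 3 := by linarith
  have hA : (0:ℝ) < (ν+1)*(ν+3) := by positivity
  have key : ((ν+1)*(ν+3))^(n:ℕ) ≤ Real.Gamma (ν+1)^4 * 8^(n:ℕ) := by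
    rw [mul_pow]; exact hP
  rw [← Real.mul_rpow h1.le h3.le]
  have hRHS : (0:ℝ) ≤ Real.Gamma (ν+1)^2 * 8^ν := by positivity
  apply le_of_pow_le_pow_left₀ two_ne_zero hRHS
  have hn2ν : ν * 2 = (n:ℝ) := by linarith
  have l1 : (((ν+1)*(ν+3))^ν)^(2:ℕ) = ((ν+1)*(ν+3))^(n:ℕ) := by
    rw [← Real.rpow_natCast (((ν+1)*(ν+3))^ν) 2, ← Real.rpow_mul hA.le,
      ← Real.rpow_natCast ((ν+1)*(ν+3)) n]
    norm_num [hn2ν]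
  have l2 : (Real.Gamma (ν+1)^2 * 8^ν)^(2:ℕ) = Real.Gamma (ν+1)^4 * 8^(n:ℕ) := by
    rw [mul_pow, ← pow_mul]
    congr 1
    rw [← Real.rpow_natCast ((8:ℝ)^ν) 2, ← Real.rpow_mul (by norm_num : (0:ℝ) ≤ 8),
      ← Real.rpow_natCast (8:ℝ) n]
    norm_num [hn2ν]
  rw [l1, l2]
  exact key
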